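/- Let X = (X_1,...,X_T) be jointly distributed random variables over [M_1]×···×[M_T] such that the conditional collision probability cp(X_i|X_{<i}) ≤ α_i/M_i for every i ∈ [T]. Then the Hellinger closeness to uniform satisfies C(X) ≥ √(1/(α_1 ··· α_T)). -/

import Mathlib

open Finset

set_option linter.unusedSectionVars false
namespace Stmt6Aux

/-- Equal-weight generalized Hölder inequality, packaged for our use. -/
theorem holder_eq {ι τ : Type*} [Fintype ι] [Fintype τ] {m : ℕ}
    (hm : Fintype.card τ = m) (hm0 : m ≠ 0)
    (f : τ → ι → ℝ) (hf : ∀ t v, 0 ≤ f t v) (q : ι → ℝ) (hq : ∀ v, 0 ≤ q v)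
    (hpt : ∀ v, q v ^ m ≤ ∏ t, f t v) :
    (∑ v, q v) ^ m ≤ ∏ t, ∑ v, f t v := by
  by_cases hex : ∃ t, ∑ v, f t v = 0
  · obtain ⟨t0, ht0⟩ := hex
    have hz : ∀ v, f t0 v = 0 := fun v =>
      (Finset.sum_eq_zero_iff_of_nonneg (fun v _ => hf t0 v)).1 ht0 v (Finset.mem_univ v)
    have hq0 : ∀ v, q v = 0 := by
      intro v
      have h1 : q v ^ m ≤ 0 := by
        have := hpt v
        rwa [Finset.prod_eq_zero (Finset.mem_univ t0) (hz v)] at this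
      have : q v ^ m = 0 := le_antisymm h1 (pow_nonneg (hq v) m)
      exact pow_eq_zero_iff hm0 |>.1 this
    rw [Finset.sum_eq_zero (fun v _ => hq0 v), zero_pow hm0,
      Finset.prod_eq_zero (Finset.mem_univ t0) ht0]
  · push_neg at hex
    have hF : ∀ t, 0 < ∑ v, f t v := fun t =>
      (Finset.sum_nonneg fun v _ => hf t v).lt_of_ne' (hex t)
    set F : τ → ℝ := fun t => ∑ v, f t v with hFdef
    have hFnn : ∀ t, (0:ℝ) ≤ F t := fun t => (hF t).le
    have hinv : (0:ℝ) ≤ (m:ℝ)⁻¹ := by positivity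
    have key : ∑ v, q v ≤ ∏ t, F t ^ ((m:ℝ)⁻¹) := by
      have step1 : ∀ v, q v ≤ ∏ t, (f t v) ^ ((m:ℝ)⁻¹) := by
        intro v
        rw [Real.finset_prod_rpow _ _ (fun t _ => hf t v)]
        calc q v = (q v ^ m) ^ ((m:ℝ)⁻¹) := (Real.pow_rpow_inv_natCast (hq v) hm0).symm
          _ ≤ (∏ t, f t v) ^ ((m:ℝ)⁻¹) :=
            Real.rpow_le_rpow (pow_nonneg (hq v) m) (hpt v) hinv
      have step2 : ∀ v, ∏ t, (f t v) ^ ((m:ℝ)⁻¹)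
          ≤ (∏ t, F t ^ ((m:ℝ)⁻¹)) * ∑ t, (m:ℝ)⁻¹ * (f t v / F t) := by
        intro v
        have hsplit : ∀ t, (f t v) ^ ((m:ℝ)⁻¹)
            = F t ^ ((m:ℝ)⁻¹) * (f t v / F t) ^ ((m:ℝ)⁻¹) := by
          intro t
          rw [← Real.mul_rpow (hFnn t) (div_nonneg (hf t v) (hFnn t)),
            mul_div_cancel₀ _ (hF t).ne']
        rw [Finset.prod_congr rfl (fun t _ => hsplit t), Finset.prod_mul_distrib]
        refine mul_le_mul_of_nonneg_left ?_ (Finset.prod_nonneg fun t _ =>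
          Real.rpow_nonneg (hFnn t) _)
        exact Real.geom_mean_le_arith_mean_weighted Finset.univ
          (fun _ => (m:ℝ)⁻¹) (fun t => f t v / F t)
          (fun t _ => hinv)
          (by rw [Finset.sum_const, Finset.card_univ, hm, nsmul_eq_mul,
            mul_inv_cancel₀ (Nat.cast_ne_zero.2 hm0)])
          (fun t _ => div_nonneg (hf t v) (hFnn t))
      calc ∑ v, q v ≤ ∑ v, ∏ t, (f t v) ^ ((m:ℝ)⁻¹) :=
            Finset.sum_le_sum fun v _ => step1 v
        _ ≤ ∑ v, ((∏ t, F t ^ ((m:ℝ)⁻¹)) * ∑ t, (m:ℝ)⁻¹ * (f t v / F t)) :=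
            Finset.sum_le_sum fun v _ => step2 v
        _ = (∏ t, F t ^ ((m:ℝ)⁻¹)) * ∑ v, ∑ t, (m:ℝ)⁻¹ * (f t v / F t) := by
            rw [← Finset.mul_sum]
        _ = ∏ t, F t ^ ((m:ℝ)⁻¹) := by
            rw [Finset.sum_comm]
            have : ∀ t, ∑ v, (m:ℝ)⁻¹ * (f t v / F t) = (m:ℝ)⁻¹ := by
              intro t
              rw [← Finset.mul_sum, ← Finset.sum_div]
              rw [div_self (hF t).ne', mul_one]
            rw [Finset.sum_congr rfl (fun t _ => this t), Finset.sum_const,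
              Finset.card_univ, hm, nsmul_eq_mul,
              mul_inv_cancel₀ (Nat.cast_ne_zero.2 hm0), mul_one]
    calc (∑ v, q v) ^ m ≤ (∏ t, F t ^ ((m:ℝ)⁻¹)) ^ m :=
          pow_le_pow_left₀ (Finset.sum_nonneg fun v _ => hq v) key m
      _ = ∏ t, F t := by
          rw [← Finset.prod_pow]
          exact Finset.prod_congr rfl fun t _ => Real.rpow_inv_natCast_pow (hFnn t) hm0


/-- The finishing inequality for the induction step. -/
theorem fin_lemma {ι : Type*} [Fintype ι] (k : ℕ) (q H : ι → ℝ) (G : ι → Fin k → ℝ)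
    (hq : ∀ v, 0 ≤ q v) (hH : ∀ v, 0 ≤ H v) (hG : ∀ v j, 0 ≤ G v j)
    (hpt : ∀ v, q v ^ (k+1) ≤ H v ^ 2 * ∏ j, G v j) :
    (∑ v, q v) ^ (k+3) ≤ (∑ v, H v) ^ 2 * (∑ v, q v ^ 2) * ∏ j, ∑ v, G v j := by
  set f : (Fin 3 ⊕ Fin k) → ι → ℝ :=
    fun t => Sum.elim ![H, H, fun v => q v ^ 2] (fun j v => G v j) t with hf_def
  have hf : ∀ t v, 0 ≤ f t v := by
    rintro (a | j) v
    · fin_cases a <;> simp [hf_def] <;> [exact hH v; exact hH v; exact sq_nonneg _]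
    · exact hG v j
  have hprod : ∀ v, ∏ t, f t v = (H v * H v * q v ^ 2) * ∏ j, G v j := by
    intro v
    rw [Fintype.prod_sum_type]
    congr 1
    rw [Fin.prod_univ_three]
    simp [hf_def]
  have hcard : Fintype.card (Fin 3 ⊕ Fin k) = k + 3 := by
    simp [Fintype.card_sum]; omega
  have hpt' : ∀ v, q v ^ (k+3) ≤ ∏ t, f t v := by
    intro v
    rw [hprod v]
    have h1 : q v ^ (k+3) = q v ^ (k+1) * q v ^ 2 := by ring
    have h2 : q v ^ (k+1) * q v ^ 2 ≤ (H v ^ 2 * ∏ j, G v j) * q v ^ 2 :=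
      mul_le_mul_of_nonneg_right (hpt v) (sq_nonneg _)
    calc q v ^ (k+3) = q v ^ (k+1) * q v ^ 2 := h1
      _ ≤ (H v ^ 2 * ∏ j, G v j) * q v ^ 2 := h2
      _ = (H v * H v * q v ^ 2) * ∏ j, G v j := by ring
  have := holder_eq hcard (by omega) f hf q hq hpt'
  calc (∑ v, q v) ^ (k+3) ≤ ∏ t, ∑ v, f t v := this
    _ = (∑ v, H v) ^ 2 * (∑ v, q v ^ 2) * ∏ j, ∑ v, G v j := by
      rw [Fintype.prod_sum_type, Fin.prod_univ_three]
      simp only [hf_def, Sum.elim_inl, Sum.elim_inr, Matrix.cons_val_zero,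
        Matrix.cons_val_one, Matrix.head_cons, Matrix.cons_val_two, Matrix.tail_cons]
      ring


section Defs
variable {T : ℕ} {β : Fin T → Type} [∀ i, Fintype (β i)] [∀ i, DecidableEq (β i)]

noncomputable def mLt (p : (∀ i, β i) → ℝ) (i : Fin T) (x : ∀ i, β i) : ℝ :=
  ∑ y, if (∀ j, j < i → y j = x j) then p y else 0

noncomputable def mLe (p : (∀ i, β i) → ℝ) (i : Fin T) (x : ∀ i, β i) (v : β i) : ℝ :=
  ∑ y, if (∀ j, j < i → y j = x j) ∧ y i = v then p y else 0

noncomputable def gam (p : (∀ i, β i) → ℝ) (i : Fin T) : ℝ :=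
  ∑ x, p x * ((∑ v, (mLe p i x v) ^ 2) / (mLt p i x) ^ 2)

theorem gam_nonneg (p : (∀ i, β i) → ℝ) (hp : ∀ x, 0 ≤ p x) (i : Fin T) :
    0 ≤ gam p i := by
  refine Finset.sum_nonneg fun x _ => mul_nonneg (hp x) (div_nonneg ?_ (sq_nonneg _))
  exact Finset.sum_nonneg fun v _ => sq_nonneg _

end Defs

section Step
variable {T : ℕ} {β : Fin (T+1) → Type} [∀ i, Fintype (β i)] [∀ i, DecidableEq (β i)]

theorem sum_pi_succ (f : (∀ i, β i) → ℝ) :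
    ∑ x, f x = ∑ v : β 0, ∑ y : ∀ i : Fin T, β i.succ, f (Fin.cons v y) := by
  rw [← (Fin.consEquiv β).sum_comp f, Fintype.sum_prod_type]
  rfl

theorem cons_lt_succ_iff (i : Fin T) (v w : β 0) (y u : ∀ i : Fin T, β i.succ) :
    (∀ j, j < Fin.succ i → Fin.cons w u j = Fin.cons v y j) ↔
      (w = v ∧ ∀ k, k < i → u k = y k) := by
  constructor
  · intro h
    refine ⟨by simpa using h 0 (Fin.succ_pos i), fun k hk => ?_⟩
    simpa using h k.succ (by rwa [Fin.succ_lt_succ_iff])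
  · rintro ⟨rfl, h⟩ j hj
    induction j using Fin.cases with
    | zero => simp
    | succ k => simpa using h k (by rwa [Fin.succ_lt_succ_iff] at hj)

variable (p : (∀ i, β i) → ℝ)

theorem mLt_succ (i : Fin T) (v : β 0) (y : ∀ i : Fin T, β i.succ) :
    mLt p i.succ (Fin.cons v y) = mLt (fun u => p (Fin.cons v u)) i y := by
  rw [mLt, sum_pi_succ (β := β), Finset.sum_comm, mLt]
  refine Finset.sum_congr rfl fun u _ => ?_
  simp only [cons_lt_succ_iff, ite_and]
  rw [Finset.sum_ite_eq' Finset.univ v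
    (fun w => if (∀ k, k < i → u k = y k) then p (Fin.cons w u) else 0)]
  simp

theorem mLe_succ (i : Fin T) (v : β 0) (y : ∀ i : Fin T, β i.succ) (w' : β i.succ) :
    mLe p i.succ (Fin.cons v y) w' = mLe (fun u => p (Fin.cons v u)) i y w' := by
  rw [mLe, sum_pi_succ (β := β), Finset.sum_comm, mLe]
  refine Finset.sum_congr rfl fun u _ => ?_
  simp only [cons_lt_succ_iff, Fin.cons_succ, ite_and]
  rw [Finset.sum_ite_eq' Finset.univ v
    (fun w => if (∀ k, k < i → u k = y k) then
      (if u i = w' then p (Fin.cons w u) else 0) else 0)]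
  simp

theorem mLt_zero (x : ∀ i, β i) : mLt p 0 x = ∑ y, p y := by
  rw [mLt]
  refine Finset.sum_congr rfl fun y _ => ?_
  rw [if_pos]
  intro j hj
  exact absurd hj (Fin.not_lt_zero j)

theorem mLe_zero (x : ∀ i, β i) (v : β 0) :
    mLe p 0 x v = ∑ u : ∀ i : Fin T, β i.succ, p (Fin.cons v u) := by
  rw [mLe, sum_pi_succ (β := β)]
  have h1 : ∀ w : β 0, (∑ u : ∀ i : Fin T, β i.succ,
      if (∀ j, j < (0 : Fin (T+1)) → Fin.cons w u j = x j) ∧ Fin.cons w u 0 = v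
      then p (Fin.cons w u) else 0)
      = if w = v then (∑ u : ∀ i : Fin T, β i.succ, p (Fin.cons w u)) else 0 := by
    intro w
    by_cases h : w = v
    · subst h
      simp [Fin.not_lt_zero]
    · simp [Fin.not_lt_zero, Fin.cons_zero, h]
  rw [Finset.sum_congr rfl fun w _ => h1 w, Finset.sum_ite_eq' Finset.univ v]
  simp

theorem gam_zero :
    gam p 0 = (∑ v : β 0, (∑ u : ∀ i : Fin T, β i.succ, p (Fin.cons v u)) ^ 2)
      / (∑ x, p x) := by
  rw [gam]
  have : ∀ x : ∀ i, β i, p x * ((∑ v, (mLe p 0 x v) ^ 2) / (mLt p 0 x) ^ 2)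
      = p x * ((∑ v : β 0, (∑ u : ∀ i : Fin T, β i.succ, p (Fin.cons v u)) ^ 2)
        / (∑ y, p y) ^ 2) := by
    intro x
    rw [mLt_zero]
    congr 2
    exact Finset.sum_congr rfl fun v _ => by rw [mLe_zero]
  rw [Finset.sum_congr rfl fun x _ => this x, ← Finset.sum_mul]
  rcases eq_or_ne (∑ x, p x) 0 with h | h
  · simp [h]
  · field_simp

theorem gam_succ (i : Fin T) :
    gam p i.succ = ∑ v : β 0, gam (fun u => p (Fin.cons v u)) i := by
  rw [gam, sum_pi_succ (β := β)]
  refine Finset.sum_congr rfl fun v _ => ?_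
  rw [gam]
  refine Finset.sum_congr rfl fun y _ => ?_
  rw [mLt_succ]
  congr 2
  exact Finset.sum_congr rfl fun w' _ => by rw [mLe_succ]

end Step

section Key

theorem key (T : ℕ) : ∀ (β : Fin T → Type) [∀ i, Fintype (β i)] [∀ i, DecidableEq (β i)]
    (p : (∀ i, β i) → ℝ), (∀ x, 0 ≤ p x) →
    (∑ x, p x) ^ (T+1) ≤ (∑ x, Real.sqrt (p x)) ^ 2 * ∏ i, gam p i := by
  induction T with
  | zero =>
    intro β _ _ p hp
    rw [Fin.prod_univ_zero, mul_one, pow_one]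
    calc ∑ x, p x = ∑ x, Real.sqrt (p x) ^ 2 :=
          Finset.sum_congr rfl fun x _ => (Real.sq_sqrt (hp x)).symm
      _ ≤ (∑ x, Real.sqrt (p x)) ^ 2 :=
          Finset.sum_sq_le_sq_sum_of_nonneg fun x _ => Real.sqrt_nonneg _
  | succ T ih =>
    intro β _ _ p hp
    by_cases h0 : ∑ x, p x = 0
    · rw [h0, zero_pow (by omega)]
      exact mul_nonneg (sq_nonneg _) (Finset.prod_nonneg fun i _ => gam_nonneg p hp i)
    have hSpos : 0 < ∑ x, p x :=
      (Finset.sum_nonneg fun x _ => hp x).lt_of_ne' h0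
    have hq : ∀ v : β 0, 0 ≤ ∑ u : ∀ i : Fin T, β i.succ, p (Fin.cons v u) :=
      fun v => Finset.sum_nonneg fun u _ => hp _
    have hH : ∀ v : β 0, 0 ≤ ∑ u : ∀ i : Fin T, β i.succ, Real.sqrt (p (Fin.cons v u)) :=
      fun v => Finset.sum_nonneg fun u _ => Real.sqrt_nonneg _
    have hGn : ∀ (v : β 0) (j : Fin T), 0 ≤ gam (fun u => p (Fin.cons v u)) j :=
      fun v j => gam_nonneg _ (fun u => hp _) j
    have hpt : ∀ v : β 0, (∑ u : ∀ i : Fin T, β i.succ, p (Fin.cons v u)) ^ (T+1)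
        ≤ (∑ u : ∀ i : Fin T, β i.succ, Real.sqrt (p (Fin.cons v u))) ^ 2
          * ∏ j, gam (fun u => p (Fin.cons v u)) j :=
      fun v => ih (fun i => β i.succ) (fun u => p (Fin.cons v u)) (fun u => hp _)
    have main := fin_lemma T _ _ _ hq hH hGn hpt
    have hS : ∑ x, p x = ∑ v : β 0, ∑ u : ∀ i : Fin T, β i.succ, p (Fin.cons v u) :=
      sum_pi_succ p
    have hE : ∑ x, Real.sqrt (p x)
        = ∑ v : β 0, ∑ u : ∀ i : Fin T, β i.succ, Real.sqrt (p (Fin.cons v u)) :=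
      sum_pi_succ _
    have hP : ∏ i, gam p i
        = ((∑ v : β 0, (∑ u : ∀ i : Fin T, β i.succ, p (Fin.cons v u)) ^ 2) / ∑ x, p x)
          * ∏ j : Fin T, ∑ v : β 0, gam (fun u => p (Fin.cons v u)) j := by
      rw [Fin.prod_univ_succ, gam_zero]
      congr 1
      exact Finset.prod_congr rfl fun j _ => gam_succ p j
    refine le_of_mul_le_mul_right ?_ hSpos
    rw [hP]
    calc (∑ x, p x) ^ (T+1+1) * (∑ x, p x) = (∑ x, p x) ^ (T+3) := by ring
      _ = (∑ v : β 0, ∑ u : ∀ i : Fin T, β i.succ, p (Fin.cons v u)) ^ (T+3) := by rw [hS]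
      _ ≤ (∑ v : β 0, ∑ u : ∀ i : Fin T, β i.succ, Real.sqrt (p (Fin.cons v u))) ^ 2
          * (∑ v : β 0, (∑ u : ∀ i : Fin T, β i.succ, p (Fin.cons v u)) ^ 2)
          * ∏ j : Fin T, ∑ v : β 0, gam (fun u => p (Fin.cons v u)) j := main
      _ = ((∑ x, Real.sqrt (p x)) ^ 2 *
            (((∑ v : β 0, (∑ u : ∀ i : Fin T, β i.succ, p (Fin.cons v u)) ^ 2) / ∑ x, p x)
            * ∏ j : Fin T, ∑ v : β 0, gam (fun u => p (Fin.cons v u)) j)) * (∑ x, p x) := by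
          rw [hE]
          field_simp

end Key

end Stmt6Aux

/-- If `cp(X_i | X_{<i}) ≤ α_i / M_i` for all `i`, then the
Hellinger closeness to uniform of the joint distribution is at least
`√(1/(α_1 ⋯ α_T))`. -/
theorem stmt6 {T : ℕ} (β : Fin T → Type) [∀ i, Fintype (β i)]
    [∀ i, DecidableEq (β i)]
    (p : (∀ i, β i) → ℝ) (hp0 : ∀ x, 0 ≤ p x) (hp1 : ∑ x, p x = 1)
    (α : Fin T → ℝ)
    -- `margLt i x` = Pr[X_{<i} = x_{<i}]
    (margLt : Fin T → (∀ i, β i) → ℝ)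
    (hmargLt : ∀ i x, margLt i x =
      ∑ y, if (∀ j, j < i → y j = x j) then p y else 0)
    -- `margLeVal i x v` = Pr[X_{<i} = x_{<i} ∧ X_i = v]
    (margLeVal : (i : Fin T) → (∀ j, β j) → β i → ℝ)
    (hmargLeVal : ∀ i x v, margLeVal i x v =
      ∑ y, if (∀ j, j < i → y j = x j) ∧ y i = v then p y else 0)
    -- `cp(X_i | X_{<i}) = E_{x ← X}[cp(X_i | X_{<i}=x_{<i})] ≤ α i / M_i`
    (hcond : ∀ i, ∑ x, p x *
        ((∑ v, (margLeVal i x v) ^ 2) / (margLt i x) ^ 2)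
      ≤ α i / Fintype.card (β i)) :
    Real.sqrt (1 / ∏ i, α i) ≤
      (1 / Fintype.card (∀ i, β i) : ℝ) *
        ∑ x, Real.sqrt (Fintype.card (∀ i, β i) * p x) := by
  have h1 : ∀ i, (∑ x, p x * ((∑ v, (margLeVal i x v) ^ 2) / (margLt i x) ^ 2))
      = Stmt6Aux.gam p i := by
    intro i
    simp only [Stmt6Aux.gam, Stmt6Aux.mLt, Stmt6Aux.mLe, hmargLt, hmargLeVal]
  have hE0 : 0 ≤ ∑ x, Real.sqrt (p x) :=
    Finset.sum_nonneg fun x _ => Real.sqrt_nonneg _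
  have hkey : 1 ≤ (∑ x, Real.sqrt (p x)) ^ 2 * ∏ i, Stmt6Aux.gam p i := by
    have := Stmt6Aux.key T β p hp0
    rwa [hp1, one_pow] at this
  have hprodle : ∏ i, Stmt6Aux.gam p i ≤ ∏ i, α i / (Fintype.card (β i) : ℝ) := by
    refine Finset.prod_le_prod (fun i _ => Stmt6Aux.gam_nonneg p hp0 i) (fun i _ => ?_)
    rw [← h1 i]
    exact hcond i
  have hA : 1 ≤ (∑ x, Real.sqrt (p x)) ^ 2 * ∏ i, α i / (Fintype.card (β i) : ℝ) := by
    calc (1:ℝ) ≤ (∑ x, Real.sqrt (p x)) ^ 2 * ∏ i, Stmt6Aux.gam p i := hkey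
      _ ≤ _ := mul_le_mul_of_nonneg_left hprodle (sq_nonneg _)
  have hApos : 0 < ∏ i, α i / (Fintype.card (β i) : ℝ) := by
    by_contra h
    push_neg at h
    have := mul_nonpos_of_nonneg_of_nonpos (sq_nonneg (∑ x, Real.sqrt (p x))) h
    linarith
  have hne : Nonempty (∀ i, β i) := by
    by_contra h
    have : IsEmpty (∀ i, β i) := not_nonempty_iff.1 h
    rw [Finset.univ_eq_empty, Finset.sum_empty] at hp1
    exact one_ne_zero hp1.symm
  have hM : 0 < ((Fintype.card (∀ i, β i) : ℕ) : ℝ) := by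
    have : 0 < Fintype.card (∀ i, β i) := Fintype.card_pos
    exact_mod_cast this
  have hcast : ((Fintype.card (∀ i, β i) : ℕ) : ℝ)
      = ∏ i, (Fintype.card (β i) : ℝ) := by
    rw [Fintype.card_pi]
    push_cast
    rfl
  have hA_eq : (∏ i, α i / (Fintype.card (β i) : ℝ))
      = (∏ i, α i) / ((Fintype.card (∀ i, β i) : ℕ) : ℝ) := by
    rw [Finset.prod_div_distrib, hcast]
  have hαpos : 0 < ∏ i, α i := by
    have h5 : 0 < (∏ i, α i / (Fintype.card (β i) : ℝ))
        * ((Fintype.card (∀ i, β i) : ℕ) : ℝ) := mul_pos hApos hM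
    rw [hA_eq, div_mul_cancel₀ _ (ne_of_gt hM)] at h5
    exact h5
  have h2 : 1 / (∏ i, α i / (Fintype.card (β i) : ℝ)) ≤ (∑ x, Real.sqrt (p x)) ^ 2 :=
    (div_le_iff₀ hApos).2 (by linarith)
  have h3 : Real.sqrt (1 / (∏ i, α i / (Fintype.card (β i) : ℝ)))
      ≤ ∑ x, Real.sqrt (p x) := by
    calc Real.sqrt (1 / (∏ i, α i / (Fintype.card (β i) : ℝ)))
        ≤ Real.sqrt ((∑ x, Real.sqrt (p x)) ^ 2) := Real.sqrt_le_sqrt h2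
      _ = ∑ x, Real.sqrt (p x) := Real.sqrt_sq hE0
  have h3' : Real.sqrt ((Fintype.card (∀ i, β i) : ℝ)) * Real.sqrt (1 / ∏ i, α i)
      ≤ ∑ x, Real.sqrt (p x) := by
    have heq : Real.sqrt (1 / (∏ i, α i / (Fintype.card (β i) : ℝ)))
        = Real.sqrt ((Fintype.card (∀ i, β i) : ℝ)) * Real.sqrt (1 / ∏ i, α i) := by
      rw [hA_eq, one_div_div, div_eq_mul_one_div,
        Real.sqrt_mul (le_of_lt hM)]
    rw [← heq]
    exact h3
  have hsum_eq : ∑ x, Real.sqrt ((Fintype.card (∀ i, β i) : ℝ) * p x)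
      = Real.sqrt ((Fintype.card (∀ i, β i) : ℝ)) * ∑ x, Real.sqrt (p x) := by
    rw [Finset.mul_sum]
    exact Finset.sum_congr rfl fun x _ => Real.sqrt_mul (le_of_lt hM) _
  rw [hsum_eq]
  have hfin : (1 / ((Fintype.card (∀ i, β i) : ℕ) : ℝ)) *
      (Real.sqrt ((Fintype.card (∀ i, β i) : ℝ)) * ∑ x, Real.sqrt (p x))
      = (Real.sqrt ((Fintype.card (∀ i, β i) : ℝ)) * ∑ x, Real.sqrt (p x))
        / ((Fintype.card (∀ i, β i) : ℕ) : ℝ) := by ring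
  rw [hfin, le_div_iff₀ hM]
  have hsM : Real.sqrt ((Fintype.card (∀ i, β i) : ℝ))
      * Real.sqrt ((Fintype.card (∀ i, β i) : ℝ))
      = ((Fintype.card (∀ i, β i) : ℕ) : ℝ) := Real.mul_self_sqrt (le_of_lt hM)
  calc Real.sqrt (1 / ∏ i, α i) * ((Fintype.card (∀ i, β i) : ℕ) : ℝ)
      = Real.sqrt ((Fintype.card (∀ i, β i) : ℝ))
        * (Real.sqrt ((Fintype.card (∀ i, β i) : ℝ)) * Real.sqrt (1 / ∏ i, α i)) := by
        rw [← mul_assoc, hsM]; ring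
    _ ≤ Real.sqrt ((Fintype.card (∀ i, β i) : ℝ)) * ∑ x, Real.sqrt (p x) :=
        mul_le_mul_of_nonneg_left h3' (Real.sqrt_nonneg _)
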